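/- Let S ∈ ℝ^{n×n}, let 𝟙 be the all-ones vector in ℝⁿ, and let 0 < μ₂ ≤ μ_m and ζ > 0 be real numbers. Suppose P ∈ ℝ^{n×n} is a symmetric positive definite matrix satisfying the modified algebraic Riccati inequality P − SᵀPS + (1 − ζ²)·(SᵀP𝟙𝟙ᵀPS)/(𝟙ᵀP𝟙) ≻ 0 (positive definite). Define the row vector Γ = (2/(μ₂+μ_m))·(𝟙ᵀPS)/(𝟙ᵀP𝟙) ∈ ℝ^{1×n}. Then for every real μ with |1 − 2μ/(μ₂+μ_m)| ≤ ζ (in particular for every μ ∈ [μ₂, μ_m] when ζ ≥ (μ_m−μ₂)/(μ₂+μ_m)), the spectral radius of S − μ𝟙Γ is strictly less than 1. -/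

import Mathlib

open Matrix

namespace PolePlacementAux

variable {n : ℕ}

lemma mul_vecMulVec' (M : Matrix (Fin n) (Fin n) ℝ) (u v : Fin n → ℝ) :
    M * vecMulVec u v = vecMulVec (M *ᵥ u) v := by
  ext i j
  simp [mul_apply, vecMulVec_apply, mulVec, dotProduct, Finset.sum_mul, mul_assoc]

lemma vecMulVec_mul' (M : Matrix (Fin n) (Fin n) ℝ) (u v : Fin n → ℝ) :
    vecMulVec u v * M = vecMulVec u (v ᵥ* M) := by
  ext i j
  simp [mul_apply, vecMulVec_apply, vecMul, dotProduct, Finset.mul_sum, mul_assoc]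

lemma vecMulVec_mul_vecMulVec' (u v x y : Fin n → ℝ) :
    vecMulVec u v * vecMulVec x y = (v ⬝ᵥ x) • vecMulVec u y := by
  ext i j
  simp [mul_apply, vecMulVec_apply, dotProduct, Finset.sum_mul]
  exact Finset.sum_congr rfl fun k _ => by ring

lemma vecMulVec_transpose' (u v : Fin n → ℝ) : (vecMulVec u v)ᵀ = vecMulVec v u := by
  ext i j; simp [vecMulVec_apply, mul_comm]

lemma vecMulVec_smul' (c : ℝ) (u v : Fin n → ℝ) :
    vecMulVec u (c • v) = c • vecMulVec u v := by
  ext i j; simp [vecMulVec_apply]; ring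

lemma smul_vecMulVec_posSemidef (t : ℝ) (ht : 0 ≤ t) (u : Fin n → ℝ) :
    (t • vecMulVec u u).PosSemidef := by
  refine PosSemidef.of_dotProduct_mulVec_nonneg ?_ ?_
  · ext i j
    simp only [Matrix.conjTranspose_apply, Matrix.smul_apply, vecMulVec_apply, star_trivial,
      smul_eq_mul]
    ring
  · intro x
    have h1 : (t • vecMulVec u u) *ᵥ x = (t * (u ⬝ᵥ x)) • u := by
      ext i
      simp [mulVec, vecMulVec_apply, dotProduct, Finset.mul_sum]
      rw [Finset.sum_mul]
      exact Finset.sum_congr rfl fun k _ => by ring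
    rw [h1]
    simp only [star_trivial, dotProduct_smul, smul_eq_mul]
    have : x ⬝ᵥ u = u ⬝ᵥ x := dotProduct_comm _ _
    rw [this]
    nlinarith [sq_nonneg (u ⬝ᵥ x)]

/-- Real part of the complex quadratic form of a real positive-definite matrix. -/
lemma re_dot_map_pos (Q : Matrix (Fin n) (Fin n) ℝ) (hQ : Q.PosDef)
    (v : Fin n → ℂ) (hv : v ≠ 0) :
    0 < (star v ⬝ᵥ ((Q.map Complex.ofReal) *ᵥ v)).re := by
  set a : Fin n → ℝ := fun i => (v i).re with ha
  set b : Fin n → ℝ := fun i => (v i).im with hb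
  have hre : (star v ⬝ᵥ ((Q.map Complex.ofReal) *ᵥ v)).re
      = a ⬝ᵥ (Q *ᵥ a) + b ⬝ᵥ (Q *ᵥ b) := by
    have h1 : (star v ⬝ᵥ ((Q.map Complex.ofReal) *ᵥ v)).re
        = ∑ i, ∑ j, Q i j * (a i * a j + b i * b j) := by
      simp only [dotProduct, mulVec, Pi.star_apply, Matrix.map_apply, Complex.re_sum,
        Finset.mul_sum]
      refine Finset.sum_congr rfl fun i _ => ?_
      refine Finset.sum_congr rfl fun j _ => ?_
      simp [Complex.mul_re, Complex.mul_im, Complex.star_def, ha, hb]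
      ring
    rw [h1]
    simp only [dotProduct, mulVec, Finset.mul_sum, ← Finset.sum_add_distrib]
    refine Finset.sum_congr rfl fun i _ => ?_
    refine Finset.sum_congr rfl fun j _ => ?_
    ring
  rw [hre]
  have hab : a ≠ 0 ∨ b ≠ 0 := by
    by_contra h
    push_neg at h
    apply hv
    funext i
    have h1 : a i = 0 := by rw [h.1]; rfl
    have h2 : b i = 0 := by rw [h.2]; rfl
    exact Complex.ext h1 h2
  have hsa : 0 ≤ a ⬝ᵥ (Q *ᵥ a) := by simpa [star_trivial] using hQ.posSemidef.dotProduct_mulVec_nonneg a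
  have hsb : 0 ≤ b ⬝ᵥ (Q *ᵥ b) := by simpa [star_trivial] using hQ.posSemidef.dotProduct_mulVec_nonneg b
  rcases hab with h | h
  · have := hQ.dotProduct_mulVec_pos h; simp only [star_trivial] at this; linarith
  · have := hQ.dotProduct_mulVec_pos h; simp only [star_trivial] at this; linarith

/-- Lyapunov criterion: if `P ≻ 0` and `P - AᵀPA ≻ 0` then every complex
eigenvalue of `A` has modulus `< 1`. -/
lemma lyapunov_spectrum (A P : Matrix (Fin n) (Fin n) ℝ) (hP : P.PosDef)
    (hQ : (P - Aᵀ * P * A).PosDef) :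
    ∀ z ∈ spectrum ℂ (A.map Complex.ofReal), ‖z‖ < 1 := by
  intro z hz
  rcases Nat.eq_zero_or_pos n with h0 | hn
  · exfalso
    subst h0
    haveI : Subsingleton (Matrix (Fin 0) (Fin 0) ℂ) :=
      ⟨fun M N => by ext i; exact absurd i.2 (by omega)⟩
    exact spectrum.mem_iff.mp hz (isUnit_of_subsingleton _)
  -- obtain an eigenvector
  rw [← AlgEquiv.spectrum_eq (Matrix.toLinAlgEquiv' : Matrix (Fin n) (Fin n) ℂ ≃ₐ[ℂ] _)] at hz
  have hev : Module.End.HasEigenvalue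
      (Matrix.toLinAlgEquiv' (A.map Complex.ofReal)) z :=
    Module.End.hasEigenvalue_iff_mem_spectrum.mpr hz
  obtain ⟨v, hv⟩ := hev.exists_hasEigenvector
  have hv0 : v ≠ 0 := hv.2
  have hAv : (A.map Complex.ofReal) *ᵥ v = z • v := by
    have := hv.apply_eq_smul
    simpa [Matrix.toLinAlgEquiv'_apply] using this
  -- quadratic form computation
  set B := A.map Complex.ofReal with hB
  set Pm := P.map Complex.ofReal with hPm
  have hmap_mul : ∀ X Y : Matrix (Fin n) (Fin n) ℝ,
      (X * Y).map Complex.ofReal = X.map Complex.ofReal * Y.map Complex.ofReal := by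
    intro X Y
    ext i j
    simp [Matrix.mul_apply]
  have hmapT : (Aᵀ).map Complex.ofReal = Bᵀ := by
    ext i j; simp [hB]
  have hmap_sub : ((P - Aᵀ * P * A).map Complex.ofReal) = Pm - Bᵀ * Pm * B := by
    ext i j
    simp [hmap_mul, hmapT, hPm, hB, Matrix.mul_apply, Matrix.sub_apply]
  have hstar : B *ᵥ (star v) = star (B *ᵥ v) := by
    ext i
    simp only [Pi.star_apply, mulVec, dotProduct, star_sum, star_mul', hB,
      Matrix.map_apply, Complex.star_def, Complex.conj_ofReal]
  have hp := re_dot_map_pos P hP v hv0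
  have hq := re_dot_map_pos _ hQ v hv0
  rw [hmap_sub] at hq
  have hquad : star v ⬝ᵥ ((Bᵀ * Pm * B) *ᵥ v)
      = ((‖z‖ ^ 2 : ℝ) : ℂ) * (star v ⬝ᵥ (Pm *ᵥ v)) := by
    have h1 : (Bᵀ * Pm * B) *ᵥ v = Bᵀ *ᵥ (Pm *ᵥ (B *ᵥ v)) := by
      rw [← Matrix.mulVec_mulVec, ← Matrix.mulVec_mulVec]
    rw [h1, Matrix.dotProduct_mulVec, Matrix.vecMul_transpose, hstar, hAv]
    have h2 : star (z • v) = star z • star v := by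
      ext i; simp [Complex.star_def]
    rw [h2, Matrix.mulVec_smul, smul_dotProduct, dotProduct_smul]
    have h3 : star z * z = ((‖z‖ ^ 2 : ℝ) : ℂ) := by
      simp [Complex.star_def, mul_comm, Complex.mul_conj, Complex.normSq_eq_norm_sq]
    rw [smul_eq_mul, smul_eq_mul, ← mul_assoc, h3]
  rw [Matrix.sub_mulVec, dotProduct_sub, hquad] at hq
  have hre : (star v ⬝ᵥ (Pm *ᵥ v) - ((‖z‖ ^ 2 : ℝ) : ℂ) * (star v ⬝ᵥ (Pm *ᵥ v))).re
      = (1 - ‖z‖ ^ 2) * (star v ⬝ᵥ (Pm *ᵥ v)).re := by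
    rw [Complex.sub_re]
    rw [show (((‖z‖ ^ 2 : ℝ) : ℂ) * (star v ⬝ᵥ (Pm *ᵥ v))).re
        = ‖z‖ ^ 2 * (star v ⬝ᵥ (Pm *ᵥ v)).re from by
      simp only [Complex.mul_re, Complex.ofReal_re, Complex.ofReal_im]; ring]
    ring
  rw [hre] at hq
  have hzsq : ‖z‖ ^ 2 < 1 := by nlinarith
  nlinarith [norm_nonneg z]

end PolePlacementAux

open PolePlacementAux

/-- Pole-placement lemma: if `P ≻ 0` satisfies the modified algebraic Riccati
inequality `P − SᵀPS + (1 − ζ²)(SᵀP𝟙𝟙ᵀPS)/(𝟙ᵀP𝟙) ≻ 0` and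
`Γ = (2/(μ₂+μ_m))(𝟙ᵀPS)/(𝟙ᵀP𝟙)`, then for every `μ` with
`|1 − 2μ/(μ₂+μ_m)| ≤ ζ` the spectral radius of `S − μ𝟙Γ` is strictly less than one. -/
theorem pole_placement {n : ℕ}
    (S : Matrix (Fin n) (Fin n) ℝ)
    (μ₂ μₘ ζ : ℝ) (hμ₂ : 0 < μ₂) (hμ : μ₂ ≤ μₘ) (hζ : 0 < ζ)
    (P : Matrix (Fin n) (Fin n) ℝ) (hP : P.PosDef)
    (hRiccati :
      (P - Sᵀ * P * S +
        ((1 - ζ ^ 2) / ((fun _ => (1 : ℝ)) ⬝ᵥ (P *ᵥ fun _ => (1 : ℝ)))) •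
          (Sᵀ * P * vecMulVec (fun _ => (1 : ℝ)) (fun _ => (1 : ℝ)) * P * S)).PosDef)
    (Γ : Fin n → ℝ)
    (hΓ : Γ = (2 / (μ₂ + μₘ) / ((fun _ => (1 : ℝ)) ⬝ᵥ (P *ᵥ fun _ => (1 : ℝ)))) •
      ((fun _ => (1 : ℝ)) ᵥ* (P * S))) :
    ∀ μ : ℝ, |1 - 2 * μ / (μ₂ + μₘ)| ≤ ζ →
      ∀ z ∈ spectrum ℂ ((S - μ • vecMulVec (fun _ => (1 : ℝ)) Γ).map Complex.ofReal),
        ‖z‖ < 1 := by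
  intro μ hμabs
  rcases Nat.eq_zero_or_pos n with h0 | hn
  · subst h0
    intro z hz
    exfalso
    haveI : Subsingleton (Matrix (Fin 0) (Fin 0) ℂ) :=
      ⟨fun M N => by ext i; exact absurd i.2 (by omega)⟩
    exact spectrum.mem_iff.mp hz (isUnit_of_subsingleton _)
  haveI : Nonempty (Fin n) := Fin.pos_iff_nonempty.mp hn
  set o : Fin n → ℝ := fun _ => (1 : ℝ) with ho
  set c : ℝ := o ⬝ᵥ (P *ᵥ o) with hcdef
  have ho0 : o ≠ (0 : Fin n → ℝ) := by
    intro h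
    have := congrFun h (Classical.arbitrary _)
    simp [ho] at this
  have hc : 0 < c := by simpa [star_trivial] using hP.dotProduct_mulVec_pos ho0
  set u : Fin n → ℝ := o ᵥ* (P * S) with hu
  have hPsymm : Pᵀ = P := by
    ext i j
    conv_rhs => rw [← hP.1]
    simp [Matrix.conjTranspose_apply]
  have huw : (Sᵀ * P) *ᵥ o = u := by
    rw [show Sᵀ * P = (P * S)ᵀ from by rw [Matrix.transpose_mul, hPsymm],
      Matrix.mulVec_transpose, hu]
  set g : ℝ := 2 / (μ₂ + μₘ) / c with hg
  have hV : vecMulVec o Γ = g • vecMulVec o u := by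
    rw [hΓ]
    exact vecMulVec_smul' g o u
  -- Riccati matrix simplification
  have hRmat : Sᵀ * P * vecMulVec o o * P * S = vecMulVec u u := by
    rw [show Sᵀ * P * vecMulVec o o = vecMulVec ((Sᵀ * P) *ᵥ o) o from
      mul_vecMulVec' (Sᵀ * P) o o, huw,
      show vecMulVec u o * P = vecMulVec u (o ᵥ* P) from vecMulVec_mul' P u o,
      show vecMulVec u (o ᵥ* P) * S = vecMulVec u ((o ᵥ* P) ᵥ* S) from vecMulVec_mul' S u _,
      Matrix.vecMul_vecMul, hu]
  rw [hRmat] at hRiccati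
  set m : ℝ := μ * g with hm
  have hA : S - μ • vecMulVec o Γ = S - m • vecMulVec o u := by
    rw [hV, smul_smul, hm]
  -- expand the quadratic form
  have hexp : (S - m • vecMulVec o u)ᵀ * P * (S - m • vecMulVec o u)
      = Sᵀ * P * S - (2 * m) • vecMulVec u u + (m ^ 2 * c) • vecMulVec u u := by
    have e0 : (S - m • vecMulVec o u)ᵀ = Sᵀ - m • vecMulVec u o := by
      rw [Matrix.transpose_sub, Matrix.transpose_smul, vecMulVec_transpose']
    have e1 : Sᵀ * P * vecMulVec o u = vecMulVec u u := by
      rw [mul_vecMulVec' (Sᵀ * P) o u, huw]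
    have e2 : vecMulVec u o * P * S = vecMulVec u u := by
      rw [vecMulVec_mul' P u o, vecMulVec_mul' S u _, Matrix.vecMul_vecMul, hu]
    have e3 : vecMulVec u o * P * vecMulVec o u = c • vecMulVec u u := by
      rw [vecMulVec_mul' P u o, vecMulVec_mul_vecMulVec']
      congr 1
      rw [hcdef, Matrix.dotProduct_mulVec]
    rw [e0]
    simp only [Matrix.sub_mul, Matrix.mul_sub, Matrix.smul_mul, Matrix.mul_smul]
    rw [e1, e2, e3]
    module
  set t : ℝ := 2 * m - m ^ 2 * c - (1 - ζ ^ 2) / c with ht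
  have hQeq : P - (S - μ • vecMulVec o Γ)ᵀ * P * (S - μ • vecMulVec o Γ)
      = (P - Sᵀ * P * S + ((1 - ζ ^ 2) / c) • vecMulVec u u) + t • vecMulVec u u := by
    rw [hA, hexp, ht]
    module
  have h0t : 0 ≤ t := by
    have hsum : 0 < μ₂ + μₘ := by linarith
    have habs := abs_le.mp hμabs
    have hsq : (1 - 2 * μ / (μ₂ + μₘ)) ^ 2 ≤ ζ ^ 2 := sq_le_sq' habs.1 habs.2
    have hterm : t = (ζ ^ 2 - (1 - 2 * μ / (μ₂ + μₘ)) ^ 2) / c := by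
      rw [ht, hm, hg]
      field_simp
      ring
    rw [hterm]
    exact div_nonneg (by linarith) hc.le
  have hQpos : (P - (S - μ • vecMulVec o Γ)ᵀ * P * (S - μ • vecMulVec o Γ)).PosDef := by
    rw [hQeq]
    exact hRiccati.add_posSemidef (smul_vecMulVec_posSemidef t h0t u)
  exact lyapunov_spectrum (S - μ • vecMulVec o Γ) P hP hQpos
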